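/- Let (λ_{d,i})_{d∈ℕ, i∈ℕ} be nonnegative real numbers such that for each d the sequence i ↦ λ_{d,i} is nonincreasing and λ_{d,1} > 0. (i) If there exist constants C, p > 0 and q ≥ 0 such that for all d ∈ ℕ and all ε' ∈ (0,1] the set {i ∈ ℕ : λ_{d,i} > (ε')²·λ_{d,1}} is finite with at most C·(ε')^{−p}·d^q elements, then for every τ > p/2 one has sup_{d∈ℕ} d^{−2q/p} · ( Σ_{i=1}^∞ (λ_{d,i}/λ_{d,1})^τ )^{1/τ} ≤ ( 1 + C + C^{2τ/p}·ζ(2τ/p) )^{1/τ} < ∞, where ζ is the Riemann zeta function. (ii) Conversely, if for some r ≥ 0, τ > 0, C > 0 and q ≥ 0, setting f(d) = ⌈C·d^q⌉, the quantity C_τ = sup_{d∈ℕ} d^{−r} · ( Σ_{i≥f(d)} (λ_{d,i}/λ_{d,1})^τ )^{1/τ} is finite, then for every d ∈ ℕ and every ε' ∈ (0,1] the set {i ∈ ℕ : λ_{d,i} > (ε')²·λ_{d,1}} is finite with at most (C + C_τ^τ)·(ε')^{−2τ}·d^{max(q, rτ)} elements. -/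

import Mathlib

open scoped ENNReal

noncomputable section

/-- The Riemann zeta function at a real argument, as `∑_{n=1}^∞ n^{-s}` in `[0,∞]`. -/
def zetaSum (s : ℝ) : ℝ≥0∞ := ∑' n : ℕ, ((n : ℝ≥0∞) + 1) ^ (-s)

lemma zetaSum_lt_top {s : ℝ} (hs : 1 < s) : zetaSum s < ∞ := by
  have hsum : Summable (fun n : ℕ => ((n : ℝ) + 1) ^ (-s)) := by
    have h1 : Summable (fun n : ℕ => (n : ℝ) ^ (-s)) :=
      Real.summable_nat_rpow.2 (by linarith)
    have h2 := h1.comp_injective (add_right_injective 1)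
    refine h2.congr fun n => ?_
    simp only [Function.comp_apply]
    push_cast
    ring_nf
  have heq : zetaSum s = ENNReal.ofReal (∑' n : ℕ, ((n : ℝ) + 1) ^ (-s)) := by
    rw [ENNReal.ofReal_tsum_of_nonneg (fun n => Real.rpow_nonneg (by positivity) _) hsum]
    unfold zetaSum
    refine tsum_congr fun n => ?_
    rw [← ENNReal.ofReal_rpow_of_pos (by positivity : (0:ℝ) < (n:ℝ) + 1)]
    rw [ENNReal.ofReal_add (by positivity) (by norm_num), ENNReal.ofReal_natCast,
      ENNReal.ofReal_one]
  rw [heq]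
  exact ENNReal.ofReal_lt_top

lemma aux_bound (Λ : ℕ → ℕ → ℝ)
    (hnn : ∀ d i : ℕ, 0 ≤ Λ d i)
    (hmono : ∀ d i j : ℕ, 1 ≤ i → i ≤ j → Λ d j ≤ Λ d i)
    (hpos : ∀ d : ℕ, 1 ≤ d → 0 < Λ d 1)
    (C p q : ℝ) (hC : 0 < C) (hp : 0 < p)
    (H : ∀ d : ℕ, 1 ≤ d → ∀ ε' : ℝ, 0 < ε' → ε' ≤ 1 →
        {i : ℕ | 1 ≤ i ∧ ε' ^ 2 * Λ d 1 < Λ d i}.Finite ∧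
        ({i : ℕ | 1 ≤ i ∧ ε' ^ 2 * Λ d 1 < Λ d i}.ncard : ℝ) ≤ C * ε' ^ (-p) * (d : ℝ) ^ q)
    (d : ℕ) (hd : 1 ≤ d) (i : ℕ) (hi : 1 ≤ i)
    (hbig : C * (d:ℝ) ^ q < i) :
    Λ d i / Λ d 1 ≤ (C * (d:ℝ) ^ q / i) ^ (2 / p) := by
  set x : ℝ := C * (d:ℝ) ^ q with hxdef
  have hdpos : (0:ℝ) < d := by exact_mod_cast hd
  have hx : 0 < x := mul_pos hC (Real.rpow_pos_of_pos hdpos q)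
  have hipos : (0:ℝ) < i := by exact_mod_cast hi
  have hbase : 0 < x / i := div_pos hx hipos
  have hbase1 : x / i < 1 := (div_lt_one hipos).2 hbig
  by_contra hcon
  push_neg at hcon
  set y : ℝ := Λ d i / Λ d 1 with hydef
  have hL1 := hpos d hd
  have hy0 : 0 < y := lt_trans (Real.rpow_pos_of_pos hbase _) hcon
  have hy1 : y ≤ 1 := by
    rw [hydef, div_le_one hL1]
    exact hmono d 1 i le_rfl hi
  set ε0 : ℝ := (x / i) ^ (1 / p) with hε0def
  have hε0 : 0 < ε0 := Real.rpow_pos_of_pos hbase _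
  have hε0sq : ε0 ^ 2 = (x / i) ^ (2 / p) := by
    rw [hε0def, ← Real.rpow_natCast (((x/i)) ^ (1/p)) 2, ← Real.rpow_mul hbase.le]
    norm_num
    congr 1
    ring
  set t : ℝ := Real.sqrt y with htdef
  have ht2 : t ^ 2 = y := Real.sq_sqrt hy0.le
  have hε0t : ε0 < t := by
    have h1 : ε0 ^ 2 < t ^ 2 := by rw [hε0sq, ht2]; exact hcon
    exact lt_of_pow_lt_pow_left₀ 2 (Real.sqrt_nonneg y) h1
  have ht1 : t ≤ 1 := by
    rw [htdef, show (1:ℝ) = Real.sqrt 1 by simp]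
    exact Real.sqrt_le_sqrt hy1
  set m : ℝ := (ε0 + t) / 2 with hmdef
  have hm0 : 0 < m := by positivity
  have hmε0 : ε0 < m := by rw [hmdef]; linarith
  have hmt : m < t := by rw [hmdef]; linarith
  have hm1 : m ≤ 1 := le_of_lt (lt_of_lt_of_le hmt ht1)
  obtain ⟨hfin, hcard⟩ := H d hd m hm0 hm1
  have hm2y : m ^ 2 < y := by
    have : m ^ 2 < t ^ 2 := by
      apply pow_lt_pow_left₀ hmt hm0.le
      norm_num
    rwa [ht2] at this
  have hsub : (Finset.Icc 1 i : Set ℕ) ⊆ {j : ℕ | 1 ≤ j ∧ m ^ 2 * Λ d 1 < Λ d j} := by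
    intro j hj
    simp only [Finset.coe_Icc, Set.mem_Icc] at hj
    refine ⟨hj.1, ?_⟩
    have h1 : m ^ 2 * Λ d 1 < Λ d i := by
      have : y * Λ d 1 = Λ d i := by rw [hydef, div_mul_cancel₀ _ hL1.ne']
      nlinarith
    exact lt_of_lt_of_le h1 (hmono d j i hj.1 hj.2)
  have hcardge : (i : ℝ) ≤ ({j : ℕ | 1 ≤ j ∧ m ^ 2 * Λ d 1 < Λ d j}.ncard : ℝ) := by
    have := Set.ncard_le_ncard hsub hfin
    rw [Set.ncard_coe_finset, Nat.card_Icc] at this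
    simp only [Nat.add_sub_cancel] at this
    exact_mod_cast this
  have hεinv : ε0 ^ (-p) = (i : ℝ) / x := by
    rw [hε0def, ← Real.rpow_mul hbase.le]
    have : 1 / p * (-p) = -1 := by field_simp
    rw [this, Real.rpow_neg_one, inv_div]
  have hlt : C * m ^ (-p) * (d:ℝ) ^ q < (i:ℝ) := by
    have h1 : m ^ (-p) < ε0 ^ (-p) :=
      Real.rpow_lt_rpow_of_neg hε0 hmε0 (neg_neg_of_pos hp)
    have h2 : C * m ^ (-p) * (d:ℝ) ^ q < C * ε0 ^ (-p) * (d:ℝ) ^ q := by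
      have hdq : 0 < (d:ℝ) ^ q := Real.rpow_pos_of_pos hdpos q
      nlinarith [Real.rpow_pos_of_pos hm0 (-p)]
    have h3 : C * ε0 ^ (-p) * (d:ℝ) ^ q = (i:ℝ) := by
      rw [hεinv]; field_simp [hxdef]; ring
    linarith
  linarith [hcard, hcardge, hlt]

lemma part_i_main (Λ : ℕ → ℕ → ℝ)
    (hmono : ∀ d i j : ℕ, 1 ≤ i → i ≤ j → Λ d j ≤ Λ d i)
    (hpos : ∀ d : ℕ, 1 ≤ d → 0 < Λ d 1)
    (C p q : ℝ) (hC : 0 < C) (hp : 0 < p) (hq : 0 ≤ q)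
    (aux : ∀ d : ℕ, 1 ≤ d → ∀ i : ℕ, 1 ≤ i → C * (d:ℝ) ^ q < i →
      Λ d i / Λ d 1 ≤ (C * (d:ℝ) ^ q / i) ^ (2 / p))
    (τ : ℝ) (hτ : p / 2 < τ) (d : ℕ) (hd : 1 ≤ d) :
    ((d : ℝ≥0∞) ^ (-(2 * q / p))) *
        (∑' i : {i : ℕ // 1 ≤ i}, ENNReal.ofReal (Λ d i.1 / Λ d 1) ^ τ) ^ (1 / τ)
      ≤ (1 + ENNReal.ofReal C +
          ENNReal.ofReal C ^ (2 * τ / p) * zetaSum (2 * τ / p)) ^ (1 / τ) := by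
  have hτ0 : 0 < τ := lt_of_le_of_lt (by positivity) hτ
  have hτne : τ ≠ 0 := hτ0.ne'
  have hpne : p ≠ 0 := hp.ne'
  set s : ℝ := 2 * τ / p with hsdef
  have hs1 : 1 < s := by
    rw [hsdef, lt_div_iff₀ hp]
    linarith
  have hs0 : 0 < s := lt_trans one_pos hs1
  have hdpos : (0:ℝ) < d := by exact_mod_cast hd
  set x : ℝ := C * (d:ℝ) ^ q with hxdef
  have hx : 0 < x := mul_pos hC (Real.rpow_pos_of_pos hdpos q)
  set N : ℕ := ⌊x⌋₊ with hNdef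
  set D : ℝ≥0∞ := (d : ℝ≥0∞) with hDdef
  have hD1 : 1 ≤ D := by rw [hDdef]; exact_mod_cast hd
  have hD0 : D ≠ 0 := by rw [hDdef]; simp; omega
  have hDtop : D ≠ ∞ := by rw [hDdef]; simp
  set F : {i : ℕ // 1 ≤ i} → ℝ≥0∞ := fun i => ENNReal.ofReal (Λ d i.1 / Λ d 1) ^ τ with hFdef
  set B : ℝ≥0∞ := 1 + ENNReal.ofReal C + ENNReal.ofReal C ^ s * zetaSum s with hBdef
  have hL1 := hpos d hd
  have hSeq : (∑' i : {i : ℕ // 1 ≤ i}, F i)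
      = ∑' n : ℕ, F ⟨n + 1, Nat.le_add_left 1 n⟩ :=
    ((⟨fun n => ⟨n + 1, Nat.le_add_left 1 n⟩, fun i => i.1 - 1,
      fun n => by simp, fun i => by
        obtain ⟨i, hi⟩ := i
        simp only [Subtype.mk.injEq]
        omega⟩ : ℕ ≃ {i : ℕ // 1 ≤ i}).tsum_eq F).symm
  -- termwise bound
  have hterm : ∀ n : ℕ, F ⟨n + 1, Nat.le_add_left 1 n⟩ ≤
      (if n < N then (1:ℝ≥0∞) else 0) + ENNReal.ofReal x ^ s * ((n : ℝ≥0∞) + 1) ^ (-s) := by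
    intro n
    by_cases hn : n < N
    · rw [if_pos hn]
      refine le_trans ?_ le_self_add
      apply ENNReal.rpow_le_one _ hτ0.le
      rw [ENNReal.ofReal_le_one, div_le_one hL1]
      exact hmono d 1 (n + 1) le_rfl (Nat.le_add_left 1 n)
    · rw [if_neg hn, zero_add]
      push_neg at hn
      have hbig' : C * (d:ℝ) ^ q < ((n + 1 : ℕ) : ℝ) := by
        have h1 : x < (N : ℝ) + 1 := Nat.lt_floor_add_one x
        have h2 : (N : ℝ) ≤ (n : ℝ) := by exact_mod_cast hn
        rw [← hxdef]
        push_cast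
        linarith
      have hb := aux d hd (n + 1) (Nat.le_add_left 1 n) hbig'
      rw [← hxdef] at hb
      have hnpos : (0:ℝ) < ((n + 1 : ℕ) : ℝ) := by positivity
      have hbase : 0 < x / ((n + 1 : ℕ) : ℝ) := div_pos hx hnpos
      calc F ⟨n + 1, Nat.le_add_left 1 n⟩ = ENNReal.ofReal (Λ d (n + 1) / Λ d 1) ^ τ := rfl
        _ ≤ ENNReal.ofReal ((x / ((n + 1 : ℕ) : ℝ)) ^ (2 / p)) ^ τ := by gcongr
        _ = ENNReal.ofReal ((x / ((n + 1 : ℕ) : ℝ)) ^ s) := by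
            rw [ENNReal.ofReal_rpow_of_pos (Real.rpow_pos_of_pos hbase _),
              ← Real.rpow_mul hbase.le]
            congr 1
            rw [hsdef]; ring
        _ = (ENNReal.ofReal x / ENNReal.ofReal (((n + 1 : ℕ) : ℝ))) ^ s := by
            rw [← ENNReal.ofReal_div_of_pos hnpos, ENNReal.ofReal_rpow_of_pos hbase]
        _ = ENNReal.ofReal x ^ s * ((n : ℝ≥0∞) + 1) ^ (-s) := by
            rw [ENNReal.div_rpow_of_nonneg _ _ hs0.le, ENNReal.rpow_neg, div_eq_mul_inv]
            congr 2
            push_cast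
            rw [ENNReal.ofReal_add (by positivity) (by norm_num), ENNReal.ofReal_natCast,
              ENNReal.ofReal_one]
  have hsum1 : (∑' n : ℕ, (if n < N then (1:ℝ≥0∞) else 0)) = (N : ℝ≥0∞) := by
    rw [tsum_eq_sum (s := Finset.range N) (fun b hb => if_neg (by simpa using hb))]
    rw [Finset.sum_congr rfl (fun b hb => if_pos (Finset.mem_range.1 hb)),
      Finset.sum_const, Finset.card_range, nsmul_eq_mul, mul_one]
  have hS : (∑' i : {i : ℕ // 1 ≤ i}, F i) ≤ B * D ^ (q * s) := by
    calc (∑' i : {i : ℕ // 1 ≤ i}, F i) = ∑' n : ℕ, F ⟨n + 1, Nat.le_add_left 1 n⟩ := hSeq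
      _ ≤ ∑' n : ℕ, ((if n < N then (1:ℝ≥0∞) else 0) +
            ENNReal.ofReal x ^ s * ((n : ℝ≥0∞) + 1) ^ (-s)) := ENNReal.tsum_le_tsum hterm
      _ = (N : ℝ≥0∞) + ENNReal.ofReal x ^ s * zetaSum s := by
          rw [ENNReal.tsum_add, hsum1, ENNReal.tsum_mul_left]
          rfl
      _ ≤ ENNReal.ofReal x + ENNReal.ofReal x ^ s * zetaSum s := by
          gcongr
          rw [← ENNReal.ofReal_natCast N]
          exact ENNReal.ofReal_le_ofReal (Nat.floor_le hx.le)
      _ = ENNReal.ofReal C * D ^ q + (ENNReal.ofReal C * D ^ q) ^ s * zetaSum s := by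
          rw [hxdef, ENNReal.ofReal_mul hC.le, ← ENNReal.ofReal_rpow_of_pos hdpos,
            ENNReal.ofReal_natCast]
      _ ≤ ENNReal.ofReal C * D ^ (q * s) + ENNReal.ofReal C ^ s * D ^ (q * s) * zetaSum s := by
          refine add_le_add ?_ ?_
          · exact mul_le_mul_right
              (ENNReal.rpow_le_rpow_of_exponent_le hD1 (by nlinarith)) _
          · refine mul_le_mul_left ?_ _
            rw [ENNReal.mul_rpow_of_nonneg _ _ hs0.le, ← ENNReal.rpow_mul]
      _ = (ENNReal.ofReal C + ENNReal.ofReal C ^ s * zetaSum s) * D ^ (q * s) := by ring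
      _ ≤ B * D ^ (q * s) := by
          refine mul_le_mul_left ?_ _
          rw [hBdef, add_assoc]
          exact le_add_self
  have hexp : (q * s) * (1 / τ) = 2 * q / p := by
    rw [hsdef]
    field_simp
  calc D ^ (-(2 * q / p)) * (∑' i : {i : ℕ // 1 ≤ i}, F i) ^ (1 / τ)
      ≤ D ^ (-(2 * q / p)) * (B * D ^ (q * s)) ^ (1 / τ) :=
        mul_le_mul_right (ENNReal.rpow_le_rpow hS (by positivity)) _
    _ = D ^ (-(2 * q / p)) * (B ^ (1 / τ) * D ^ (2 * q / p)) := by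
        rw [ENNReal.mul_rpow_of_nonneg _ _ (by positivity), ← ENNReal.rpow_mul, hexp]
    _ = B ^ (1 / τ) * (D ^ (-(2 * q / p)) * D ^ (2 * q / p)) := by ring
    _ = B ^ (1 / τ) := by
        rw [← ENNReal.rpow_add _ _ hD0 hDtop, neg_add_cancel, ENNReal.rpow_zero, mul_one]

lemma part_ii_main (Λ : ℕ → ℕ → ℝ)
    (hnn : ∀ d i : ℕ, 0 ≤ Λ d i)
    (hpos : ∀ d : ℕ, 1 ≤ d → 0 < Λ d 1)
    (r τ C q : ℝ) (hr : 0 ≤ r) (hτ : 0 < τ) (hC : 0 < C) (hq : 0 ≤ q)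
    (Cτ : ℝ≥0∞)
    (hCτ : Cτ = (⨆ d : {d : ℕ // 1 ≤ d},
          ((d.1 : ℝ≥0∞) ^ (-r)) *
            (∑' i : {i : ℕ // ⌈C * (d.1 : ℝ) ^ q⌉₊ ≤ i},
              ENNReal.ofReal (Λ d.1 i.1 / Λ d.1 1) ^ τ) ^ (1 / τ)))
    (hCfin : Cτ ≠ ∞)
    (d : ℕ) (hd : 1 ≤ d) (ε' : ℝ) (he0 : 0 < ε') (he1 : ε' ≤ 1) :
    {i : ℕ | 1 ≤ i ∧ ε' ^ 2 * Λ d 1 < Λ d i}.Finite ∧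
      ({i : ℕ | 1 ≤ i ∧ ε' ^ 2 * Λ d 1 < Λ d i}.ncard : ℝ) ≤
        (C + Cτ.toReal ^ τ) * ε' ^ (-(2 * τ)) * (d : ℝ) ^ (max q (r * τ)) := by
  have hL1 := hpos d hd
  have hdpos : (0:ℝ) < d := by exact_mod_cast hd
  have hd1 : (1:ℝ) ≤ d := by exact_mod_cast hd
  set D : ℝ≥0∞ := (d : ℝ≥0∞) with hDdef
  have hD0 : D ≠ 0 := by rw [hDdef]; simp; omega
  have hDtop : D ≠ ∞ := by rw [hDdef]; simp
  set f : ℕ := ⌈C * (d : ℝ) ^ q⌉₊ with hfdef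
  set g : {i : ℕ // f ≤ i} → ℝ≥0∞ :=
    fun i => ENNReal.ofReal (Λ d i.1 / Λ d 1) ^ τ with hgdef
  set S : ℝ≥0∞ := ∑' i : {i : ℕ // f ≤ i}, g i with hSdef
  have hle : (D ^ (-r)) * S ^ (1 / τ) ≤ Cτ := by
    rw [hCτ]
    exact le_iSup (fun dd : {d : ℕ // 1 ≤ d} =>
      ((dd.1 : ℝ≥0∞) ^ (-r)) *
        (∑' i : {i : ℕ // ⌈C * (dd.1 : ℝ) ^ q⌉₊ ≤ i},
          ENNReal.ofReal (Λ dd.1 i.1 / Λ dd.1 1) ^ τ) ^ (1 / τ)) ⟨d, hd⟩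
  -- S ≤ Cτ^τ * D^(r*τ)
  have hS : S ≤ Cτ ^ τ * D ^ (r * τ) := by
    have h1 : S ^ (1 / τ) ≤ Cτ * D ^ r := by
      have h2 : D ^ r * (D ^ (-r) * S ^ (1 / τ)) = S ^ (1 / τ) := by
        rw [← mul_assoc, ← ENNReal.rpow_add _ _ hD0 hDtop, add_neg_cancel,
          ENNReal.rpow_zero, one_mul]
      calc S ^ (1 / τ) = D ^ r * (D ^ (-r) * S ^ (1 / τ)) := h2.symm
        _ ≤ D ^ r * Cτ := mul_le_mul_right hle _
        _ = Cτ * D ^ r := mul_comm _ _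
    calc S = (S ^ (1 / τ)) ^ τ := by
          rw [← ENNReal.rpow_mul, one_div, inv_mul_cancel₀ hτ.ne', ENNReal.rpow_one]
      _ ≤ (Cτ * D ^ r) ^ τ := ENNReal.rpow_le_rpow h1 hτ.le
      _ = Cτ ^ τ * D ^ (r * τ) := by
          rw [ENNReal.mul_rpow_of_nonneg _ _ hτ.le, ← ENNReal.rpow_mul]
  have hStop : S ≠ ∞ := by
    refine ne_top_of_le_ne_top ?_ hS
    exact ENNReal.mul_ne_top (ENNReal.rpow_ne_top_of_nonneg hτ.le hCfin)
      (ENNReal.rpow_ne_top_of_nonneg (by positivity) hDtop)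
  -- constant lower bound on terms of S coming from A
  set c : ℝ≥0∞ := ENNReal.ofReal (ε' ^ (2 * τ)) with hcdef
  have hc0 : c ≠ 0 := by
    rw [hcdef]
    simp only [ne_eq, ENNReal.ofReal_eq_zero, not_le]
    positivity
  set A : Set ℕ := {i : ℕ | 1 ≤ i ∧ ε' ^ 2 * Λ d 1 < Λ d i} with hAdef
  have hterm : ∀ i : ℕ, i ∈ A → ∀ h : f ≤ i, c ≤ g ⟨i, h⟩ := by
    intro i hi h
    have h1 : ε' ^ 2 ≤ Λ d i / Λ d 1 := by
      rw [le_div_iff₀ hL1]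
      exact hi.2.le
    calc c = ENNReal.ofReal (ε' ^ 2) ^ τ := by
          rw [hcdef, ENNReal.ofReal_rpow_of_pos (by positivity), ← Real.rpow_natCast ε' 2,
            ← Real.rpow_mul he0.le]
          norm_num
      _ ≤ ENNReal.ofReal (Λ d i / Λ d 1) ^ τ := by gcongr
      _ = g ⟨i, h⟩ := rfl
  set B2 : Set ℕ := A ∩ {i : ℕ | f ≤ i} with hB2def
  have hι : ∀ j : B2, f ≤ j.1 := fun j => j.2.2
  have hcomp : (∑' _j : B2, c) ≤ S := by
    have h1 : (∑' j : B2, c) ≤ ∑' j : B2, g ⟨j.1, hι j⟩ :=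
      ENNReal.tsum_le_tsum (fun j => hterm j.1 j.2.1 (hι j))
    have h2 : (∑' j : B2, g ⟨j.1, hι j⟩) ≤ S := by
      rw [hSdef]
      refine ENNReal.tsum_comp_le_tsum_of_injective
        (f := fun j : B2 => (⟨j.1, hι j⟩ : {i : ℕ // f ≤ i})) ?_ g
      intro a b hab
      apply Subtype.ext
      have := congrArg (fun z : {i : ℕ // f ≤ i} => z.1) hab
      simpa using this
    exact le_trans h1 h2
  have hB2fin : B2.Finite := by
    by_contra hinf
    have hinf' : B2.Infinite := hinf
    haveI := hinf'.to_subtype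
    rw [ENNReal.tsum_const_eq_top_of_ne_zero hc0] at hcomp
    exact hStop (top_le_iff.1 hcomp)
  -- finiteness of A
  have hAsplit : A ⊆ (↑(Finset.Ico 1 f) : Set ℕ) ∪ B2 := by
    intro i hi
    by_cases h : f ≤ i
    · exact Or.inr ⟨hi, h⟩
    · exact Or.inl (by simp [Finset.mem_Ico]; exact ⟨hi.1, by omega⟩)
  have hAfin : A.Finite :=
    Set.Finite.subset (Set.Finite.union (Finset.Ico 1 f).finite_toSet hB2fin) hAsplit
  refine ⟨hAfin, ?_⟩
  -- cardinality bound for B2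
  have hKbound : (B2.ncard : ℝ≥0∞) * c ≤ Cτ ^ τ * D ^ (r * τ) := by
    refine le_trans ?_ (le_trans hcomp hS)
    haveI := hB2fin.fintype
    have heq : (∑' _j : B2, c) = (B2.ncard : ℝ≥0∞) * c := by
      rw [tsum_eq_sum (s := (Finset.univ : Finset B2)) (by simp), Finset.sum_const,
        Finset.card_univ, ← Nat.card_eq_fintype_card, Nat.card_coe_set_eq, nsmul_eq_mul]
    exact heq.ge
  -- convert to real
  have hcne : c ≠ ∞ := ENNReal.ofReal_ne_top
  have hKreal : (B2.ncard : ℝ) * ε' ^ (2 * τ) ≤ Cτ.toReal ^ τ * (d : ℝ) ^ (r * τ) := by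
    have h1 := ENNReal.toReal_mono
      (ENNReal.mul_ne_top (ENNReal.rpow_ne_top_of_nonneg hτ.le hCfin)
        (ENNReal.rpow_ne_top_of_nonneg (by positivity) hDtop)) hKbound
    rw [ENNReal.toReal_mul, ENNReal.toReal_mul, hcdef, ENNReal.toReal_ofReal (by positivity),
      ← ENNReal.toReal_rpow, ← ENNReal.toReal_rpow, ENNReal.toReal_natCast, hDdef,
      ENNReal.toReal_natCast] at h1
    exact h1
  have hepos : (0:ℝ) < ε' ^ (2 * τ) := Real.rpow_pos_of_pos he0 _
  have hK : (B2.ncard : ℝ) ≤ Cτ.toReal ^ τ * (d : ℝ) ^ (r * τ) * ε' ^ (-(2 * τ)) := by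
    rw [Real.rpow_neg he0.le]
    rw [← le_div_iff₀ hepos] at hKreal
    calc (B2.ncard : ℝ) ≤ Cτ.toReal ^ τ * (d : ℝ) ^ (r * τ) / ε' ^ (2 * τ) := hKreal
      _ = Cτ.toReal ^ τ * (d : ℝ) ^ (r * τ) * (ε' ^ (2 * τ))⁻¹ := by ring
  -- cardinality bound for the low part
  have hlow : ((A ∩ ↑(Finset.Ico 1 f)).ncard : ℝ) ≤ C * (d : ℝ) ^ q := by
    have h1 : (A ∩ ↑(Finset.Ico 1 f)).ncard ≤ (Finset.Ico 1 f).card := by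
      rw [← Set.ncard_coe_finset (Finset.Ico 1 f)]
      exact Set.ncard_le_ncard Set.inter_subset_right (Finset.Ico 1 f).finite_toSet
    have h2 : ((Finset.Ico 1 f).card : ℝ) ≤ C * (d : ℝ) ^ q := by
      rw [Nat.card_Ico]
      have h3 : (f : ℝ) < C * (d : ℝ) ^ q + 1 := Nat.ceil_lt_add_one (by positivity)
      have h4 : (1:ℕ) ≤ f := Nat.one_le_ceil_iff.2 (by positivity)
      have : ((f - 1 : ℕ) : ℝ) = (f : ℝ) - 1 := by
        push_cast [h4]
        ring
      rw [this]
      linarith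
    calc ((A ∩ ↑(Finset.Ico 1 f)).ncard : ℝ) ≤ ((Finset.Ico 1 f).card : ℝ) := by exact_mod_cast h1
      _ ≤ C * (d : ℝ) ^ q := h2
  -- combine
  have hcard : (A.ncard : ℝ) ≤ ((A ∩ ↑(Finset.Ico 1 f)).ncard : ℝ) + (B2.ncard : ℝ) := by
    have h1 : A = (A ∩ ↑(Finset.Ico 1 f)) ∪ B2 := by
      apply Set.Subset.antisymm
      · intro i hi
        by_cases h : f ≤ i
        · exact Or.inr ⟨hi, h⟩
        · exact Or.inl ⟨hi, by simp [Finset.mem_Ico]; exact ⟨hi.1, by omega⟩⟩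
      · rintro i (hi | hi) <;> exact hi.1
    have h2 := Set.ncard_union_le (A ∩ ↑(Finset.Ico 1 f)) B2
    rw [← h1] at h2
    exact_mod_cast h2
  have heinv : (1:ℝ) ≤ ε' ^ (-(2 * τ)) :=
    Real.one_le_rpow_of_pos_of_le_one_of_nonpos he0 he1 (by linarith)
  have hdq : (d : ℝ) ^ q ≤ (d : ℝ) ^ (max q (r * τ)) :=
    Real.rpow_le_rpow_of_exponent_le hd1 (le_max_left _ _)
  have hdrt : (d : ℝ) ^ (r * τ) ≤ (d : ℝ) ^ (max q (r * τ)) :=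
    Real.rpow_le_rpow_of_exponent_le hd1 (le_max_right _ _)
  have hCt0 : (0:ℝ) ≤ Cτ.toReal ^ τ := by positivity
  have hdm0 : (0:ℝ) < (d : ℝ) ^ (max q (r * τ)) := Real.rpow_pos_of_pos hdpos _
  have hei0 : (0:ℝ) < ε' ^ (-(2 * τ)) := Real.rpow_pos_of_pos he0 _
  calc (A.ncard : ℝ) ≤ ((A ∩ ↑(Finset.Ico 1 f)).ncard : ℝ) + (B2.ncard : ℝ) := hcard
    _ ≤ C * (d : ℝ) ^ q + Cτ.toReal ^ τ * (d : ℝ) ^ (r * τ) * ε' ^ (-(2 * τ)) :=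
        add_le_add hlow hK
    _ ≤ (C + Cτ.toReal ^ τ) * ε' ^ (-(2 * τ)) * (d : ℝ) ^ (max q (r * τ)) := by
        have e1 : C * (d : ℝ) ^ q ≤ C * ε' ^ (-(2 * τ)) * (d : ℝ) ^ (max q (r * τ)) := by
          have h1 : C * (d : ℝ) ^ q ≤ C * (d : ℝ) ^ (max q (r * τ)) :=
            mul_le_mul_of_nonneg_left hdq hC.le
          have h2 : C * (d : ℝ) ^ (max q (r * τ)) * 1 ≤
              C * (d : ℝ) ^ (max q (r * τ)) * ε' ^ (-(2 * τ)) :=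
            mul_le_mul_of_nonneg_left heinv (by positivity)
          nlinarith
        have e2 : Cτ.toReal ^ τ * (d : ℝ) ^ (r * τ) * ε' ^ (-(2 * τ)) ≤
            Cτ.toReal ^ τ * ε' ^ (-(2 * τ)) * (d : ℝ) ^ (max q (r * τ)) := by
          have h3 := mul_le_mul_of_nonneg_left hdrt (mul_nonneg hCt0 hei0.le)
          nlinarith
        nlinarith

/-- A version of Theorem 5.2 of Novak–Woźniakowski (normalized error criterion).
`Λ d i` is the `i`-th largest eigenvalue of `T_d† T_d`, and
`#{i : λ_{d,i} > (ε')² λ_{d,1}}` is the information complexity `n(ε'·√λ_{d,1}, d)`. -/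
theorem stmt_13
    (Λ : ℕ → ℕ → ℝ)
    (hnn : ∀ d i : ℕ, 0 ≤ Λ d i)
    (hmono : ∀ d i j : ℕ, 1 ≤ i → i ≤ j → Λ d j ≤ Λ d i)
    (hpos : ∀ d : ℕ, 1 ≤ d → 0 < Λ d 1) :
    -- (i) polynomial tractability implies summability of the normalized eigenvalues
    (∀ C p q : ℝ, 0 < C → 0 < p → 0 ≤ q →
      (∀ d : ℕ, 1 ≤ d → ∀ ε' : ℝ, 0 < ε' → ε' ≤ 1 →
        {i : ℕ | 1 ≤ i ∧ ε' ^ 2 * Λ d 1 < Λ d i}.Finite ∧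
        ({i : ℕ | 1 ≤ i ∧ ε' ^ 2 * Λ d 1 < Λ d i}.ncard : ℝ) ≤
          C * ε' ^ (-p) * (d : ℝ) ^ q) →
      ∀ τ : ℝ, p / 2 < τ →
        (∀ d : ℕ, 1 ≤ d →
          ((d : ℝ≥0∞) ^ (-(2 * q / p))) *
            (∑' i : {i : ℕ // 1 ≤ i},
              ENNReal.ofReal (Λ d i.1 / Λ d 1) ^ τ) ^ (1 / τ)
          ≤ (1 + ENNReal.ofReal C +
              ENNReal.ofReal C ^ (2 * τ / p) * zetaSum (2 * τ / p)) ^ (1 / τ)) ∧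
        (1 + ENNReal.ofReal C +
          ENNReal.ofReal C ^ (2 * τ / p) * zetaSum (2 * τ / p)) ^ (1 / τ) < ∞) ∧
    -- (ii) summability of the normalized tails implies polynomial tractability
    (∀ r τ C q : ℝ, 0 ≤ r → 0 < τ → 0 < C → 0 ≤ q →
      ∀ Cτ : ℝ≥0∞,
        Cτ = (⨆ d : {d : ℕ // 1 ≤ d},
          ((d.1 : ℝ≥0∞) ^ (-r)) *
            (∑' i : {i : ℕ // ⌈C * (d.1 : ℝ) ^ q⌉₊ ≤ i},
              ENNReal.ofReal (Λ d.1 i.1 / Λ d.1 1) ^ τ) ^ (1 / τ)) →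
        Cτ ≠ ∞ →
        ∀ d : ℕ, 1 ≤ d → ∀ ε' : ℝ, 0 < ε' → ε' ≤ 1 →
          {i : ℕ | 1 ≤ i ∧ ε' ^ 2 * Λ d 1 < Λ d i}.Finite ∧
          ({i : ℕ | 1 ≤ i ∧ ε' ^ 2 * Λ d 1 < Λ d i}.ncard : ℝ) ≤
            (C + Cτ.toReal ^ τ) * ε' ^ (-(2 * τ)) * (d : ℝ) ^ (max q (r * τ))) := by
  constructor
  · intro C p q hC hp hq H τ hτ
    have hτ0 : 0 < τ := lt_of_le_of_lt (by positivity) hτ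
    have hs1 : 1 < 2 * τ / p := by
      rw [lt_div_iff₀ hp]
      linarith
    have hs0 : (0:ℝ) < 2 * τ / p := lt_trans one_pos hs1
    have aux : ∀ d : ℕ, 1 ≤ d → ∀ i : ℕ, 1 ≤ i → C * (d:ℝ) ^ q < i →
        Λ d i / Λ d 1 ≤ (C * (d:ℝ) ^ q / i) ^ (2 / p) :=
      fun d hd i hi hbig => aux_bound Λ hnn hmono hpos C p q hC hp H d hd i hi hbig
    constructor
    · intro d hd
      exact part_i_main Λ hmono hpos C p q hC hp hq aux τ hτ d hd
    · refine ENNReal.rpow_lt_top_of_nonneg (by positivity) ?_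
      refine ENNReal.add_ne_top.2 ⟨ENNReal.add_ne_top.2 ⟨ENNReal.one_ne_top,
        ENNReal.ofReal_ne_top⟩, ENNReal.mul_ne_top
        (ENNReal.rpow_ne_top_of_nonneg hs0.le ENNReal.ofReal_ne_top)
        (zetaSum_lt_top hs1).ne⟩
  · intro r τ C q hr hτ hC hq Cτ hCτ hCfin d hd ε' he0 he1
    exact part_ii_main Λ hnn hpos r τ C q hr hτ hC hq Cτ hCτ hCfin d hd ε' he0 he1
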